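/- Let B be a basic graph with an adapted complex structure J, and let B̃ be an expansion of B, obtained by repeatedly choosing a vertex u and a pair of vertices v, w with w = Jv and u ∉ {v, w}, and adding the two edges uv and uw (no edge added twice). Extend J to an almost complex structure J̃ on 𝔫_{B̃} by keeping J on the vertices and old edges and, after fixing a labeling v_1, …, v_n of the vertices, setting for each added pair of edges e_{i,k}, e_{j,k} with Jv_i = v_j: J̃ e_{i,k} = e_{j,k} if k < i,j or k > i,j, and J̃ e_{i,k} = −e_{j,k} if i < k < j or j < k < i (and J̃² = −id). Then J̃ is integrable (its Nijenhuis tensor vanishes), hence J̃ is an adapted complex structure on B̃ extending J. -/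
import Mathlib


/-!  Framework: the 2-step nilpotent Lie algebra `𝔫_G` associated to a finite simple
graph `G` (Dani–Mainkar construction), and adapted complex structures on it. -/

open scoped BigOperators

namespace GraphLie

variable {V : Type*} [Fintype V] [LinearOrder V]

/-- The underlying real vector space of the Lie algebra `𝔫_G` associated to a graph `G`:
real-valued functions on its basis `V ⊕ G.edgeSet` (vertices and edges). -/
abbrev Niln (G : SimpleGraph V) : Type _ := (V ⊕ G.edgeSet) → ℝ

variable (G : SimpleGraph V) [DecidableRel G.Adj]

/-- The basis vector of `𝔫_G` corresponding to the vertex `v`. -/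
noncomputable def vtx (v : V) : Niln G := Pi.single (Sum.inl v) 1

/-- The basis vector of `𝔫_G` corresponding to the edge `e`. -/
noncomputable def edg (e : G.edgeSet) : Niln G := Pi.single (Sum.inr e) 1

/-- The basis vector of `𝔫_G` corresponding to a vertex or an edge. -/
noncomputable def basisVec (b : V ⊕ G.edgeSet) : Niln G := Pi.single b 1

/-- The bracket of two vertex generators: for adjacent vertices `i < j` (with respect to
the chosen labeling of the vertices) `[v_i, v_j] = e_{i,j}` and `[v_j, v_i] = -e_{i,j}`;
non-adjacent vertices commute. -/
noncomputable def bracketVtx (i j : V) : Niln G :=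
  if h : G.Adj i j then
    (if i < j then edg G ⟨s(i, j), G.mem_edgeSet.mpr h⟩
     else - edg G ⟨s(i, j), G.mem_edgeSet.mpr h⟩)
  else 0

/-- The Lie bracket of `𝔫_G`, extended bilinearly from the generators; all the
edge generators are central. -/
noncomputable def bracket (x y : Niln G) : Niln G :=
  ∑ i : V, ∑ j : V, (x (Sum.inl i) * y (Sum.inl j)) • bracketVtx G i j

/-- An adapted complex structure on the graph `G`: a linear endomorphism `J` of `𝔫_G`
with `J ∘ J = -id`, whose Nijenhuis tensor vanishes, and which sends each basis vector
(vertex or edge) to plus or minus a basis vector. -/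
structure AdaptedCS : Type _ where
  J : Niln G →ₗ[ℝ] Niln G
  j_squared : ∀ x, J (J x) = -x
  integrable : ∀ x y,
    bracket G x y + J (bracket G (J x) y + bracket G x (J y)) - bracket G (J x) (J y) = 0
  adapted : ∀ b : V ⊕ G.edgeSet,
    (∃ b', J (basisVec G b) = basisVec G b') ∨ (∃ b', J (basisVec G b) = - basisVec G b')

variable {G}

/-- An edge of `G` joining vertices `v` and `w` is distinguished if `Jv = w` or `Jw = v`. -/
def AdaptedCS.Distinguished (Jc : AdaptedCS G) (e : G.edgeSet) : Prop :=
  ∃ v w : V, (e : Sym2 V) = s(v, w) ∧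
    (Jc.J (vtx G v) = vtx G w ∨ Jc.J (vtx G w) = vtx G v)

end GraphLie

namespace GraphLie

variable {V : Type*} [Fintype V] [LinearOrder V]

/-- A graph is *basic* if it is a disjoint union of copies of `A₁` (two vertices, no
edge), `A₂` (three vertices, exactly one edge) and `A₃` (four vertices, two edges
sharing no endpoint). -/
def IsBasic (H : SimpleGraph V) : Prop :=
  ∃ P : Set (Set V),
    (∀ v : V, ∃! p, p ∈ P ∧ v ∈ p) ∧
    ∀ p ∈ P,
      (∃ a b : V, a ≠ b ∧ p = {a, b} ∧
        H.neighborSet a = ∅ ∧ H.neighborSet b = ∅) ∨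
      (∃ a b c : V, p = {a, b, c} ∧
        H.neighborSet a = {b} ∧ H.neighborSet b = {a} ∧ H.neighborSet c = ∅) ∨
      (∃ a b c d : V, p = {a, b, c, d} ∧
        a ≠ c ∧ a ≠ d ∧ b ≠ c ∧ b ≠ d ∧
        H.neighborSet a = {b} ∧ H.neighborSet b = {a} ∧
        H.neighborSet c = {d} ∧ H.neighborSet d = {c})

open scoped Classical

/-- The natural inclusion of `𝔫_H` into `𝔫_G` for graphs `H`, `G` on the same vertex
set: it matches the vertex basis vectors, and the basis vector of each edge of `H`
which is also an edge of `G` with the corresponding basis vector of `𝔫_G`. -/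
noncomputable def inclFun (H G : SimpleGraph V) (x : Niln H) : Niln G := fun b =>
  match b with
  | Sum.inl v => x (Sum.inl v)
  | Sum.inr e =>
      if h : (e : Sym2 V) ∈ H.edgeSet then x (Sum.inr ⟨(e : Sym2 V), h⟩) else 0

section Aux
set_option linter.unusedSectionVars false
set_option linter.unusedTactic false

variable {V : Type*} [Fintype V] [LinearOrder V]
variable (G : SimpleGraph V) [DecidableRel G.Adj]

lemma niln_eq_sum (x : Niln G) : x = ∑ b, x b • basisVec G b := by
  funext c
  rw [Finset.sum_apply]
  rw [Finset.sum_eq_single c]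
  · simp [basisVec]
  · intro b _ hb
    simp [basisVec, Pi.single_apply, hb]
  · intro h; exact absurd (Finset.mem_univ c) h

/-- Extend a map on basis vectors to a linear endomorphism. -/
noncomputable def extendLin (F : (V ⊕ G.edgeSet) → Niln G) : Niln G →ₗ[ℝ] Niln G where
  toFun x := ∑ b, x b • F b
  map_add' x y := by
    rw [← Finset.sum_add_distrib]
    refine Finset.sum_congr rfl fun b _ => ?_
    simp [add_smul]
  map_smul' c x := by
    rw [Finset.smul_sum]
    refine Finset.sum_congr rfl fun b _ => ?_
    simp [mul_smul]

lemma extendLin_basis (F : (V ⊕ G.edgeSet) → Niln G) (b : V ⊕ G.edgeSet) :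
    extendLin G F (basisVec G b) = F b := by
  show ∑ b', basisVec G b b' • F b' = F b
  rw [Finset.sum_eq_single b]
  · simp [basisVec]
  · intro b' _ hb'
    simp [basisVec, Pi.single_apply, Ne.symm hb']
  · intro h; exact absurd (Finset.mem_univ b) h

lemma bracket_add_left (x x' y : Niln G) :
    bracket G (x + x') y = bracket G x y + bracket G x' y := by
  unfold bracket
  rw [← Finset.sum_add_distrib]
  refine Finset.sum_congr rfl fun i _ => ?_
  rw [← Finset.sum_add_distrib]
  refine Finset.sum_congr rfl fun j _ => ?_
  simp [add_mul, add_smul]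

lemma bracket_smul_left (c : ℝ) (x y : Niln G) :
    bracket G (c • x) y = c • bracket G x y := by
  unfold bracket
  rw [Finset.smul_sum]
  refine Finset.sum_congr rfl fun i _ => ?_
  rw [Finset.smul_sum]
  refine Finset.sum_congr rfl fun j _ => ?_
  simp [mul_smul, mul_assoc]

lemma bracket_add_right (x y y' : Niln G) :
    bracket G x (y + y') = bracket G x y + bracket G x y' := by
  unfold bracket
  rw [← Finset.sum_add_distrib]
  refine Finset.sum_congr rfl fun i _ => ?_
  rw [← Finset.sum_add_distrib]
  refine Finset.sum_congr rfl fun j _ => ?_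
  simp [mul_add, add_smul]

lemma bracket_smul_right (c : ℝ) (x y : Niln G) :
    bracket G x (c • y) = c • bracket G x y := by
  unfold bracket
  rw [Finset.smul_sum]
  refine Finset.sum_congr rfl fun i _ => ?_
  rw [Finset.smul_sum]
  refine Finset.sum_congr rfl fun j _ => ?_
  simp only [Pi.smul_apply, smul_eq_mul, mul_smul]
  exact smul_comm (x (Sum.inl i)) c (y (Sum.inl j) • bracketVtx G i j)

/-- The bracket as a bilinear map. -/
noncomputable def brkL : Niln G →ₗ[ℝ] Niln G →ₗ[ℝ] Niln G :=
  LinearMap.mk₂ ℝ (bracket G) (bracket_add_left G) (bracket_smul_left G)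
    (bracket_add_right G) (bracket_smul_right G)

lemma bracket_vtx_vtx (a b : V) :
    bracket G (vtx G a) (vtx G b) = bracketVtx G a b := by
  unfold bracket
  rw [Finset.sum_eq_single a]
  · rw [Finset.sum_eq_single b]
    · simp [vtx]
    · intro j _ hj
      simp [vtx, Pi.single_apply, hj]
    · intro h; exact absurd (Finset.mem_univ b) h
  · intro i _ hi
    rw [Finset.sum_eq_zero]
    intro j _
    simp [vtx, Pi.single_apply, hi]
  · intro h; exact absurd (Finset.mem_univ a) h

lemma bracket_vtxfree_left (x y : Niln G) (hx : ∀ i : V, x (Sum.inl i) = 0) :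
    bracket G x y = 0 := by
  unfold bracket
  rw [Finset.sum_eq_zero]
  intro i _
  rw [Finset.sum_eq_zero]
  intro j _
  simp [hx i]

lemma bracket_vtxfree_right (x y : Niln G) (hy : ∀ j : V, y (Sum.inl j) = 0) :
    bracket G x y = 0 := by
  unfold bracket
  rw [Finset.sum_eq_zero]
  intro i _
  rw [Finset.sum_eq_zero]
  intro j _
  simp [hy j]

lemma bracketVtx_antisymm (a b : V) : bracketVtx G b a = - bracketVtx G a b := by
  unfold bracketVtx
  by_cases h : G.Adj a b
  · have h' : G.Adj b a := h.symm
    rw [dif_pos h, dif_pos h']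
    have hne : a ≠ b := h.ne
    have hs : s(b, a) = s(a, b) := Sym2.eq_swap
    rcases lt_or_gt_of_ne hne with hlt | hgt
    · rw [if_pos hlt, if_neg (not_lt.mpr hlt.le)]
      congr 1
      simp [edg, hs]
    · rw [if_neg (not_lt.mpr hgt.le), if_pos hgt]
      congr 1
      simp [edg, hs]
  · rw [dif_neg h, dif_neg (fun h' => h h'.symm), neg_zero]

end Aux

section Aux2
set_option linter.unusedSectionVars false
set_option linter.unusedTactic false

variable {V : Type*} [Fintype V] [LinearOrder V]

open scoped Classical

lemma smul_vtx_inj {G : SimpleGraph V} [DecidableRel G.Adj] {x y : V} {ε δ : ℝ}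
    (hε : ε ≠ 0) (h : ε • vtx G x = δ • vtx G y) : x = y ∧ ε = δ := by
  have h1 := congrFun h (Sum.inl x)
  by_cases hxy : x = y
  · subst hxy
    refine ⟨rfl, ?_⟩
    simpa [vtx] using h1
  · exfalso
    simp [vtx, Pi.single_apply, hxy, Ne.symm hxy] at h1
    exact hε h1

lemma smul_vtx_ne_smul_edg {G : SimpleGraph V} [DecidableRel G.Adj] {x : V}
    {e : G.edgeSet} {ε δ : ℝ} (hε : ε ≠ 0) :
    ε • vtx G x ≠ δ • edg G e := by
  intro h
  have h1 := congrFun h (Sum.inl x)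
  simp [vtx, edg, Pi.single_apply] at h1
  exact hε h1

/-- The inclusion `𝔫_B → 𝔫_G` as a linear map. -/
noncomputable def inclLin (B G : SimpleGraph V) : Niln B →ₗ[ℝ] Niln G where
  toFun := inclFun B G
  map_add' x y := by
    funext b
    cases b with
    | inl v => rfl
    | inr e =>
      simp only [inclFun, Pi.add_apply]
      split
      · rfl
      · simp
  map_smul' c x := by
    funext b
    cases b with
    | inl v => rfl
    | inr e =>
      simp only [inclFun, Pi.smul_apply, RingHom.id_apply, smul_eq_mul]
      split
      · rfl
      · simp

lemma inclFun_vtx (B G : SimpleGraph V) (v : V) :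
    inclFun B G (vtx B v) = vtx G v := by
  funext b
  cases b with
  | inl w => simp [inclFun, vtx, Pi.single_apply, Sum.inl.injEq]
  | inr e =>
    simp only [inclFun, vtx]
    split
    · simp [Pi.single_apply]
    · simp [Pi.single_apply]

lemma inclFun_zero (B G : SimpleGraph V) : inclFun B G 0 = 0 :=
  map_zero (inclLin B G)

lemma inclFun_neg (B G : SimpleGraph V) (x : Niln B) :
    inclFun B G (-x) = - inclFun B G x := map_neg (inclLin B G) x

lemma inclFun_add (B G : SimpleGraph V) (x y : Niln B) :
    inclFun B G (x + y) = inclFun B G x + inclFun B G y := map_add (inclLin B G) x y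

lemma inclFun_smul (B G : SimpleGraph V) (c : ℝ) (x : Niln B) :
    inclFun B G (c • x) = c • inclFun B G x := map_smul (inclLin B G) c x

lemma inclFun_sub (B G : SimpleGraph V) (x y : Niln B) :
    inclFun B G (x - y) = inclFun B G x - inclFun B G y := map_sub (inclLin B G) x y

lemma inclFun_edg (B G : SimpleGraph V) (e : B.edgeSet) (h : (e : Sym2 V) ∈ G.edgeSet) :
    inclFun B G (edg B e) = edg G ⟨(e : Sym2 V), h⟩ := by
  funext b
  cases b with
  | inl w => simp [inclFun, edg, Pi.single_apply]
  | inr f =>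
    simp only [inclFun, edg]
    by_cases hef : (f : Sym2 V) = (e : Sym2 V)
    · have hf : (f : Sym2 V) ∈ B.edgeSet := hef ▸ e.2
      rw [dif_pos hf]
      have h1 : (⟨(f : Sym2 V), hf⟩ : B.edgeSet) = e := Subtype.ext hef
      have h2 : f = (⟨(e : Sym2 V), h⟩ : G.edgeSet) := Subtype.ext hef
      rw [h1, h2, Pi.single_eq_same, Pi.single_eq_same]
    · have h2 : f ≠ (⟨(e : Sym2 V), h⟩ : G.edgeSet) :=
        fun hh => hef (congrArg Subtype.val hh)
      rw [Pi.single_apply, if_neg (by simp only [Sum.inr.injEq]; exact h2)]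
      split
      · rename_i hf
        have h1 : (⟨(f : Sym2 V), hf⟩ : B.edgeSet) ≠ e :=
          fun hh => hef (congrArg Subtype.val hh)
        rw [Pi.single_apply, if_neg (by simp only [Sum.inr.injEq]; exact h1)]
      · rfl

lemma inclFun_vtxfree (B G : SimpleGraph V) (x : Niln B) (i : V) :
    inclFun B G x (Sum.inl i) = x (Sum.inl i) := rfl

lemma bracketVtx_transfer {B G : SimpleGraph V} [DecidableRel B.Adj] [DecidableRel G.Adj]
    (hBG : ∀ a b : V, B.Adj a b → G.Adj a b) {a b : V} (h : B.Adj a b) :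
    bracketVtx G a b = inclFun B G (bracketVtx B a b) := by
  have hG : G.Adj a b := hBG a b h
  unfold bracketVtx
  rw [dif_pos h, dif_pos hG]
  have he : inclFun B G (edg B ⟨s(a, b), B.mem_edgeSet.mpr h⟩)
      = edg G ⟨s(a, b), G.mem_edgeSet.mpr hG⟩ :=
    inclFun_edg B G _ (G.mem_edgeSet.mpr hG)
  split
  · rw [← he]
  · rw [← he, ← inclFun_neg]

lemma bracketVtx_transfer_zero {B G : SimpleGraph V} [DecidableRel B.Adj] [DecidableRel G.Adj]
    {a b : V} (hg : ¬ G.Adj a b) (hb : ¬ B.Adj a b) :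
    bracketVtx G a b = inclFun B G (bracketVtx B a b) := by
  unfold bracketVtx
  rw [dif_neg hg, dif_neg hb]
  rw [inclFun_zero]

lemma bracketVtx_ne_zero {G : SimpleGraph V} [DecidableRel G.Adj] {a b : V}
    (h : G.Adj a b) : bracketVtx G a b ≠ 0 := by
  unfold bracketVtx
  rw [dif_pos h]
  intro hh
  split at hh
  · have := congrFun hh (Sum.inr ⟨s(a,b), G.mem_edgeSet.mpr h⟩)
    simp [edg] at this
  · have := congrFun hh (Sum.inr ⟨s(a,b), G.mem_edgeSet.mpr h⟩)
    simp [edg] at this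

lemma bracketVtx_not_adj {G : SimpleGraph V} [DecidableRel G.Adj] {a b : V}
    (h : ¬ G.Adj a b) : bracketVtx G a b = 0 := dif_neg h

end Aux2

section Main
set_option linter.unusedSectionVars false
set_option linter.unusedTactic false

open scoped Classical

variable {V : Type*} [Fintype V] [LinearOrder V]

/-- The sign used in the definition of the extended complex structure. -/
noncomputable def sgn (t : V × V × V) : ℝ :=
  if (t.1 < t.2.1 ∧ t.1 < t.2.2) ∨ (t.2.1 < t.1 ∧ t.2.2 < t.1) then 1 else -1

lemma sgn_mul_self (t : V × V × V) : sgn t * sgn t = 1 := by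
  unfold sgn; split <;> norm_num

lemma sgn_cases (t : V × V × V) : sgn t = 1 ∨ sgn t = -1 := by
  unfold sgn; split <;> simp

/-- All the hypotheses of the statement, bundled. -/
structure Hyp (B : SimpleGraph V) [DecidableRel B.Adj] (Jb : AdaptedCS B)
    (T : Finset (V × V × V)) (G : SimpleGraph V) [DecidableRel G.Adj] : Prop where
  hJ : ∀ t ∈ T, Jb.J (vtx B t.2.1) = vtx B t.2.2
  hu : ∀ t ∈ T, t.1 ≠ t.2.1 ∧ t.1 ≠ t.2.2
  hnew : ∀ t ∈ T, s(t.1, t.2.1) ∉ B.edgeSet ∧ s(t.1, t.2.2) ∉ B.edgeSet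
  hpair : ∀ t ∈ T, s(t.1, t.2.1) ≠ s(t.1, t.2.2)
  hdist : ∀ t ∈ T, ∀ t' ∈ T, t ≠ t' →
    ({s(t.1, t.2.1), s(t.1, t.2.2)} : Set (Sym2 V)) ∩
      {s(t'.1, t'.2.1), s(t'.1, t'.2.2)} = ∅
  hG : ∀ a b : V, G.Adj a b ↔
    (B.Adj a b ∨ ∃ t ∈ T, s(a, b) = s(t.1, t.2.1) ∨ s(a, b) = s(t.1, t.2.2))
  hdeg : ∀ v x y : V, B.Adj v x → B.Adj v y → x = y

variable {B : SimpleGraph V} [DecidableRel B.Adj] {Jb : AdaptedCS B}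
variable {T : Finset (V × V × V)} {G : SimpleGraph V} [DecidableRel G.Adj]

namespace Hyp

variable (H : Hyp B Jb T G)
include H

lemma adj1 {t : V × V × V} (ht : t ∈ T) : G.Adj t.1 t.2.1 :=
  (H.hG _ _).mpr (Or.inr ⟨t, ht, Or.inl rfl⟩)

lemma adj2 {t : V × V × V} (ht : t ∈ T) : G.Adj t.1 t.2.2 :=
  (H.hG _ _).mpr (Or.inr ⟨t, ht, Or.inr rfl⟩)

lemma hle : ∀ a b : V, B.Adj a b → G.Adj a b :=
  fun a b h => (H.hG a b).mpr (Or.inl h)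

lemma edge_le {e : Sym2 V} (he : e ∈ B.edgeSet) : e ∈ G.edgeSet := by
  induction e with
  | _ a b => exact G.mem_edgeSet.mpr (H.hle a b (B.mem_edgeSet.mp he))

/-- `Jw = -v` for each triple. -/
lemma hJ2 {t : V × V × V} (ht : t ∈ T) : Jb.J (vtx B t.2.2) = - vtx B t.2.1 := by
  have := congrArg Jb.J (H.hJ t ht)
  rw [Jb.j_squared] at this
  rw [← this]

lemma uniq11 {t t' : V × V × V} (ht : t ∈ T) (ht' : t' ∈ T)
    (h : s(t.1, t.2.1) = s(t'.1, t'.2.1)) : t = t' := by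
  by_contra hne
  have := H.hdist t ht t' ht' hne
  rw [Set.eq_empty_iff_forall_notMem] at this
  exact this s(t.1, t.2.1) ⟨Or.inl rfl, Or.inl h⟩

lemma uniq22 {t t' : V × V × V} (ht : t ∈ T) (ht' : t' ∈ T)
    (h : s(t.1, t.2.2) = s(t'.1, t'.2.2)) : t = t' := by
  by_contra hne
  have := H.hdist t ht t' ht' hne
  rw [Set.eq_empty_iff_forall_notMem] at this
  exact this s(t.1, t.2.2) ⟨Or.inr rfl, Or.inr h⟩

lemma uniq12 {t t' : V × V × V} (ht : t ∈ T) (ht' : t' ∈ T) :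
    s(t.1, t.2.1) ≠ s(t'.1, t'.2.2) := by
  intro h
  by_cases hne : t = t'
  · subst hne; exact H.hpair t ht h
  · have := H.hdist t ht t' ht' hne
    rw [Set.eq_empty_iff_forall_notMem] at this
    exact this s(t.1, t.2.1) ⟨Or.inl rfl, Or.inr h⟩

/-- The extension of `J` on basis vectors. -/
noncomputable def Fv (b : V ⊕ G.edgeSet) : Niln G :=
  match b with
  | Sum.inl v => inclFun B G (Jb.J (vtx B v))
  | Sum.inr e =>
    if hBe : (e : Sym2 V) ∈ B.edgeSet then inclFun B G (Jb.J (edg B ⟨(e : Sym2 V), hBe⟩))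
    else if h1 : ∃ t, t ∈ T ∧ (e : Sym2 V) = s(t.1, t.2.1) then
      sgn h1.choose •
        edg G ⟨s(h1.choose.1, h1.choose.2.2), G.mem_edgeSet.mpr (H.adj2 h1.choose_spec.1)⟩
    else if h2 : ∃ t, t ∈ T ∧ (e : Sym2 V) = s(t.1, t.2.2) then
      (- sgn h2.choose) •
        edg G ⟨s(h2.choose.1, h2.choose.2.1), G.mem_edgeSet.mpr (H.adj1 h2.choose_spec.1)⟩
    else 0

lemma Fv_inl (v : V) : H.Fv (Sum.inl v) = inclFun B G (Jb.J (vtx B v)) := rfl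

lemma Fv_old (e : G.edgeSet) (hBe : (e : Sym2 V) ∈ B.edgeSet) :
    H.Fv (Sum.inr e) = inclFun B G (Jb.J (edg B ⟨(e : Sym2 V), hBe⟩)) := by
  show dite _ _ _ = _
  rw [dif_pos hBe]

lemma Fv_new1 {t : V × V × V} (ht : t ∈ T) (e : G.edgeSet)
    (he : (e : Sym2 V) = s(t.1, t.2.1)) :
    H.Fv (Sum.inr e) = sgn t • edg G ⟨s(t.1, t.2.2), G.mem_edgeSet.mpr (H.adj2 ht)⟩ := by
  have hBe : (e : Sym2 V) ∉ B.edgeSet := by rw [he]; exact (H.hnew t ht).1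
  have h1 : ∃ t', t' ∈ T ∧ (e : Sym2 V) = s(t'.1, t'.2.1) := ⟨t, ht, he⟩
  show dite _ _ _ = _
  rw [dif_neg hBe, dif_pos h1]
  have hch : h1.choose = t := by
    apply H.uniq11 h1.choose_spec.1 ht
    rw [← h1.choose_spec.2, he]
  congr 1
  · rw [hch]
  · exact congrArg (edg G) (Subtype.ext
      (show s(h1.choose.1, h1.choose.2.2) = s(t.1, t.2.2) by rw [hch]))

lemma Fv_new2 {t : V × V × V} (ht : t ∈ T) (e : G.edgeSet)
    (he : (e : Sym2 V) = s(t.1, t.2.2)) :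
    H.Fv (Sum.inr e) = (- sgn t) • edg G ⟨s(t.1, t.2.1), G.mem_edgeSet.mpr (H.adj1 ht)⟩ := by
  have hBe : (e : Sym2 V) ∉ B.edgeSet := by rw [he]; exact (H.hnew t ht).2
  have h1 : ¬ ∃ t', t' ∈ T ∧ (e : Sym2 V) = s(t'.1, t'.2.1) := by
    rintro ⟨t', ht', he'⟩
    exact H.uniq12 ht' ht (by rw [← he']; exact he)
  have h2 : ∃ t', t' ∈ T ∧ (e : Sym2 V) = s(t'.1, t'.2.2) := ⟨t, ht, he⟩
  show dite _ _ _ = _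
  rw [dif_neg hBe, dif_neg h1, dif_pos h2]
  have hch : h2.choose = t := by
    apply H.uniq22 h2.choose_spec.1 ht
    rw [← h2.choose_spec.2, he]
  congr 1
  · rw [hch]
  · exact congrArg (edg G) (Subtype.ext
      (show s(h2.choose.1, h2.choose.2.1) = s(t.1, t.2.1) by rw [hch]))

/-- Each edge of `G` is an old edge or one of the two new edges of a triple. -/
lemma edge_cases (e : G.edgeSet) :
    (e : Sym2 V) ∈ B.edgeSet ∨ (∃ t ∈ T, (e : Sym2 V) = s(t.1, t.2.1)) ∨
      (∃ t ∈ T, (e : Sym2 V) = s(t.1, t.2.2)) := by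
  obtain ⟨s, hs⟩ := e
  induction s with
  | _ a b =>
    have : G.Adj a b := G.mem_edgeSet.mp hs
    rcases (H.hG a b).mp this with h | ⟨t, ht, h | h⟩
    · exact Or.inl (B.mem_edgeSet.mpr h)
    · exact Or.inr (Or.inl ⟨t, ht, h⟩)
    · exact Or.inr (Or.inr ⟨t, ht, h⟩)

/-- The extended almost complex structure. -/
noncomputable def Jt : Niln G →ₗ[ℝ] Niln G := extendLin G H.Fv

lemma Jt_basis (b : V ⊕ G.edgeSet) : H.Jt (basisVec G b) = H.Fv b :=
  extendLin_basis G H.Fv b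

lemma Jt_vtx (v : V) : H.Jt (vtx G v) = inclFun B G (Jb.J (vtx B v)) :=
  H.Jt_basis (Sum.inl v)

lemma Jt_edg (e : G.edgeSet) : H.Jt (edg G e) = H.Fv (Sum.inr e) :=
  H.Jt_basis (Sum.inr e)

end Hyp

/-- Two linear maps out of `Niln G` agreeing on the basis agree. -/
lemma niln_linear_ext {M : Type*} [AddCommMonoid M] [Module ℝ M]
    (G : SimpleGraph V) [DecidableRel G.Adj] (f g : Niln G →ₗ[ℝ] M)
    (h : ∀ b, f (basisVec G b) = g (basisVec G b)) (x : Niln G) : f x = g x := by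
  have hx := niln_eq_sum G x
  calc f x = f (∑ b, x b • basisVec G b) := by rw [← hx]
    _ = ∑ b, x b • f (basisVec G b) := by rw [map_sum]; simp only [map_smul]
    _ = ∑ b, x b • g (basisVec G b) := by simp only [h]
    _ = g (∑ b, x b • basisVec G b) := by rw [map_sum]; simp only [map_smul]
    _ = g x := by rw [← hx]

namespace Hyp

variable (H : Hyp B Jb T G)
include H

/-- `J̃` extends `J` through the inclusion. -/
lemma Jt_incl (z : Niln B) : H.Jt (inclFun B G z) = inclFun B G (Jb.J z) := by
  have := niln_linear_ext B (H.Jt ∘ₗ inclLin B G) (inclLin B G ∘ₗ Jb.J) ?_ z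
  · exact this
  intro b
  cases b with
  | inl v =>
    show H.Jt (inclFun B G (vtx B v)) = inclFun B G (Jb.J (vtx B v))
    rw [inclFun_vtx]
    exact H.Jt_vtx v
  | inr e =>
    show H.Jt (inclFun B G (edg B e)) = inclFun B G (Jb.J (edg B e))
    rw [inclFun_edg B G e (H.edge_le e.2)]
    rw [H.Jt_edg]
    rw [H.Fv_old _ e.2]

end Hyp

end Main

section Main2
set_option linter.unusedSectionVars false
set_option linter.unusedTactic false
set_option maxHeartbeats 1000000

open scoped Classical

variable {V : Type*} [Fintype V] [LinearOrder V]
variable {B : SimpleGraph V} [DecidableRel B.Adj] {Jb : AdaptedCS B}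
variable {T : Finset (V × V × V)} {G : SimpleGraph V} [DecidableRel G.Adj]

lemma sgn_one₁ {u v w : V} (h1 : u < v) (h2 : u < w) : sgn (u, v, w) = 1 :=
  if_pos (Or.inl ⟨h1, h2⟩)

lemma sgn_one₂ {u v w : V} (h1 : v < u) (h2 : w < u) : sgn (u, v, w) = 1 :=
  if_pos (Or.inr ⟨h1, h2⟩)

lemma sgn_negone₁ {u v w : V} (h1 : u < v) (h2 : w < u) : sgn (u, v, w) = -1 := by
  unfold sgn
  rw [if_neg (by rintro (⟨-, hh⟩ | ⟨hh, -⟩); exacts [lt_asymm h2 hh, lt_asymm h1 hh])]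

lemma sgn_negone₂ {u v w : V} (h1 : v < u) (h2 : u < w) : sgn (u, v, w) = -1 := by
  unfold sgn
  rw [if_neg (by rintro (⟨hh, -⟩ | ⟨-, hh⟩); exacts [lt_asymm h1 hh, lt_asymm h2 hh])]

lemma jb_flip {a x : V} {ε : ℝ} (hε : ε * ε = 1) (h : Jb.J (vtx B a) = ε • vtx B x) :
    Jb.J (vtx B x) = (-ε) • vtx B a := by
  have h2 := congrArg Jb.J h
  rw [Jb.j_squared, map_smul] at h2
  calc Jb.J (vtx B x) = (ε * ε) • Jb.J (vtx B x) := by rw [hε, one_smul]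
    _ = ε • (ε • Jb.J (vtx B x)) := by rw [smul_smul]
    _ = ε • (-vtx B a) := by rw [← h2]
    _ = (-ε) • vtx B a := by rw [smul_neg, neg_smul]

/-- Adapted classification of `J` on a vertex: vertex-free image, or `±` a vertex. -/
lemma jb_classify (a : V) : (∀ i, Jb.J (vtx B a) (Sum.inl i) = 0) ∨
    ∃ ε x, (ε = (1:ℝ) ∨ ε = -1) ∧ Jb.J (vtx B a) = ε • vtx B x := by
  have had := Jb.adapted (Sum.inl a)
  have hb : basisVec B (Sum.inl a) = vtx B a := rfl
  rw [hb] at had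
  rcases had with ⟨b', hb'⟩ | ⟨b', hb'⟩
  · cases b' with
    | inl x => exact Or.inr ⟨1, x, Or.inl rfl, by rw [hb', one_smul]; rfl⟩
    | inr e =>
      left
      intro i
      rw [hb']
      simp [basisVec, Pi.single_apply]
  · cases b' with
    | inl x => exact Or.inr ⟨-1, x, Or.inr rfl, by rw [hb', neg_one_smul]; rfl⟩
    | inr e =>
      left
      intro i
      rw [hb']
      simp [basisVec, Pi.single_apply]

/-- Adapted classification of `J` on an old edge. -/
lemma jb_classify_edge (e : B.edgeSet) : (∀ i, Jb.J (edg B e) (Sum.inl i) = 0) ∨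
    ∃ ε z, (ε = (1:ℝ) ∨ ε = -1) ∧ Jb.J (edg B e) = ε • vtx B z ∧
      (∀ i, Jb.J (vtx B z) (Sum.inl i) = 0) := by
  have had := Jb.adapted (Sum.inr e)
  have hb : basisVec B (Sum.inr e) = edg B e := rfl
  rw [hb] at had
  have key : ∀ ε : ℝ, ε * ε = 1 → ∀ z : V, Jb.J (edg B e) = ε • vtx B z →
      (∀ i, Jb.J (vtx B z) (Sum.inl i) = 0) := by
    intro ε hε z hz i
    have h2 := congrArg Jb.J hz
    rw [Jb.j_squared, map_smul] at h2
    have : Jb.J (vtx B z) = (-ε) • edg B e := by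
      calc Jb.J (vtx B z) = (ε * ε) • Jb.J (vtx B z) := by rw [hε, one_smul]
        _ = ε • (ε • Jb.J (vtx B z)) := by rw [smul_smul]
        _ = ε • (-edg B e) := by rw [← h2]
        _ = (-ε) • edg B e := by rw [smul_neg, neg_smul]
    rw [this]
    simp [edg, Pi.single_apply]
  rcases had with ⟨b', hb'⟩ | ⟨b', hb'⟩
  · cases b' with
    | inl z =>
      right
      have hz : Jb.J (edg B e) = (1:ℝ) • vtx B z := by rw [hb', one_smul]; rfl
      exact ⟨1, z, Or.inl rfl, hz, key 1 (by norm_num) z hz⟩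
    | inr f => left; intro i; rw [hb']; simp [basisVec, Pi.single_apply]
  · cases b' with
    | inl z =>
      right
      have hz : Jb.J (edg B e) = (-1:ℝ) • vtx B z := by rw [hb', neg_one_smul]; rfl
      exact ⟨-1, z, Or.inr rfl, hz, key (-1) (by norm_num) z hz⟩
    | inr f => left; intro i; rw [hb']; simp [basisVec, Pi.single_apply]

lemma etype_not_vtype {a y : V} {δ : ℝ} (hδ : δ = 1 ∨ δ = -1)
    (h : Jb.J (vtx B a) = δ • vtx B y)
    (ha : ∀ i, Jb.J (vtx B a) (Sum.inl i) = 0) : False := by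
  have := ha y
  rw [h] at this
  simp [vtx] at this
  rcases hδ with h1 | h1 <;> rw [h1] at this <;> norm_num at this

namespace Hyp

variable (H : Hyp B Jb T G)
include H

/-- `t.2.1` is not vertex-free. -/
lemma not_etype_21 {t : V × V × V} (ht : t ∈ T)
    (h : ∀ i, Jb.J (vtx B t.2.1) (Sum.inl i) = 0) : False := by
  have := h t.2.2
  rw [H.hJ t ht] at this
  simp [vtx] at this

lemma not_etype_22 {t : V × V × V} (ht : t ∈ T)
    (h : ∀ i, Jb.J (vtx B t.2.2) (Sum.inl i) = 0) : False := by
  have := h t.2.1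
  rw [H.hJ2 ht] at this
  simp [vtx] at this

lemma ne_vw {t : V × V × V} (ht : t ∈ T) : t.2.1 ≠ t.2.2 := by
  intro h
  have h1 := H.hJ t ht
  have h2 := H.hJ2 ht
  rw [← h] at h2
  rw [h1] at h2
  have := congrFun h2 (Sum.inl t.2.2)
  rw [← h] at this
  simp [vtx] at this
  norm_num at this

/-- The key sign computation: `J̃ [u,v] = [u,w]`. -/
lemma L2a {t : V × V × V} (ht : t ∈ T) :
    H.Jt (bracketVtx G t.1 t.2.1) = bracketVtx G t.1 t.2.2 := by
  obtain ⟨u, v, w⟩ := t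
  simp only at *
  have hadj1 : G.Adj u v := H.adj1 ht
  have hadj2 : G.Adj u w := H.adj2 ht
  have hne1 : u ≠ v := (H.hu _ ht).1
  have hne2 : u ≠ w := (H.hu _ ht).2
  have hFv := H.Fv_new1 ht ⟨s(u, v), G.mem_edgeSet.mpr hadj1⟩ rfl
  have hJe : H.Jt (edg G ⟨s(u, v), G.mem_edgeSet.mpr hadj1⟩)
      = sgn (u, v, w) • edg G ⟨s(u, w), G.mem_edgeSet.mpr hadj2⟩ := by
    rw [H.Jt_edg]; exact hFv
  unfold bracketVtx
  rw [dif_pos hadj1, dif_pos hadj2]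
  rcases lt_or_gt_of_ne hne1 with h1 | h1 <;> rcases lt_or_gt_of_ne hne2 with h2 | h2
  · rw [if_pos h1, if_pos h2, hJe]
    have : sgn (u, v, w) = 1 := if_pos (Or.inl ⟨h1, h2⟩)
    rw [this, one_smul]
  · rw [if_pos h1, if_neg (not_lt.mpr h2.le), hJe, sgn_negone₁ h1 h2, neg_one_smul]
  · rw [if_neg (not_lt.mpr h1.le), if_pos h2, map_neg, hJe, sgn_negone₂ h1 h2,
      neg_one_smul, neg_neg]
  · rw [if_neg (not_lt.mpr h1.le), if_neg (not_lt.mpr h2.le), map_neg, hJe]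
    have : sgn (u, v, w) = 1 := if_pos (Or.inr ⟨h1, h2⟩)
    rw [this, one_smul]

/-- The key sign computation: `J̃ [u,w] = -[u,v]`. -/
lemma L2b {t : V × V × V} (ht : t ∈ T) :
    H.Jt (bracketVtx G t.1 t.2.2) = - bracketVtx G t.1 t.2.1 := by
  obtain ⟨u, v, w⟩ := t
  simp only at *
  have hadj1 : G.Adj u v := H.adj1 ht
  have hadj2 : G.Adj u w := H.adj2 ht
  have hne1 : u ≠ v := (H.hu _ ht).1
  have hne2 : u ≠ w := (H.hu _ ht).2
  have hFv := H.Fv_new2 ht ⟨s(u, w), G.mem_edgeSet.mpr hadj2⟩ rfl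
  have hJe : H.Jt (edg G ⟨s(u, w), G.mem_edgeSet.mpr hadj2⟩)
      = (- sgn (u, v, w)) • edg G ⟨s(u, v), G.mem_edgeSet.mpr hadj1⟩ := by
    rw [H.Jt_edg]; exact hFv
  unfold bracketVtx
  rw [dif_pos hadj1, dif_pos hadj2]
  rcases lt_or_gt_of_ne hne1 with h1 | h1 <;> rcases lt_or_gt_of_ne hne2 with h2 | h2
  · rw [if_pos h1, if_pos h2, hJe]
    have : sgn (u, v, w) = 1 := if_pos (Or.inl ⟨h1, h2⟩)
    rw [this, neg_smul, one_smul]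
  · rw [if_pos h1, if_neg (not_lt.mpr h2.le), map_neg, hJe, sgn_negone₁ h1 h2]
    norm_num
  · rw [if_neg (not_lt.mpr h1.le), if_pos h2, hJe, sgn_negone₂ h1 h2]
    norm_num
  · rw [if_neg (not_lt.mpr h1.le), if_neg (not_lt.mpr h2.le), map_neg, hJe]
    have : sgn (u, v, w) = 1 := if_pos (Or.inr ⟨h1, h2⟩)
    rw [this]
    norm_num

/-- `J̃ ∘ J̃ = -id`. -/
lemma jt_sq (x : Niln G) : H.Jt (H.Jt x) = -x := by
  have := niln_linear_ext G (H.Jt ∘ₗ H.Jt) (-LinearMap.id) ?_ x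
  · simpa using this
  intro b
  simp only [LinearMap.comp_apply, LinearMap.neg_apply, LinearMap.id_apply]
  rw [H.Jt_basis]
  cases b with
  | inl v =>
    rw [H.Fv_inl, H.Jt_incl, Jb.j_squared, inclFun_neg, inclFun_vtx]
    rfl
  | inr e =>
    rcases H.edge_cases e with hold | ⟨t, ht, hnew1⟩ | ⟨t, ht, hnew2⟩
    · rw [H.Fv_old e hold, H.Jt_incl, Jb.j_squared, inclFun_neg,
        inclFun_edg B G _ (H.edge_le (Subtype.coe_prop _))]
      rfl
    · rw [H.Fv_new1 ht e hnew1, map_smul, H.Jt_edg,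
        H.Fv_new2 ht ⟨s(t.1, t.2.2), G.mem_edgeSet.mpr (H.adj2 ht)⟩ rfl]
      rw [smul_smul]
      have he : (⟨s(t.1, t.2.1), G.mem_edgeSet.mpr (H.adj1 ht)⟩ : G.edgeSet) = e :=
        Subtype.ext hnew1.symm
      rw [he, mul_neg, sgn_mul_self, neg_one_smul]
      rfl
    · rw [H.Fv_new2 ht e hnew2, map_smul, H.Jt_edg,
        H.Fv_new1 ht ⟨s(t.1, t.2.1), G.mem_edgeSet.mpr (H.adj1 ht)⟩ rfl]
      rw [smul_smul]
      have he : (⟨s(t.1, t.2.2), G.mem_edgeSet.mpr (H.adj2 ht)⟩ : G.edgeSet) = e :=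
        Subtype.ext hnew2.symm
      rw [he, neg_mul, sgn_mul_self, neg_one_smul]
      rfl

/-- `J̃` is adapted. -/
lemma jt_adapted (b : V ⊕ G.edgeSet) :
    (∃ b', H.Jt (basisVec G b) = basisVec G b') ∨
    (∃ b', H.Jt (basisVec G b) = - basisVec G b') := by
  rw [H.Jt_basis]
  have embed : ∀ b' : V ⊕ B.edgeSet, ∃ c : V ⊕ G.edgeSet,
      inclFun B G (basisVec B b') = basisVec G c := by
    intro b'
    cases b' with
    | inl v => exact ⟨Sum.inl v, inclFun_vtx B G v⟩
    | inr e => exact ⟨Sum.inr ⟨e, H.edge_le e.2⟩, inclFun_edg B G e (H.edge_le e.2)⟩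
  cases b with
  | inl v =>
    rw [H.Fv_inl]
    rcases Jb.adapted (Sum.inl v) with ⟨b', hb'⟩ | ⟨b', hb'⟩
    · obtain ⟨c, hc⟩ := embed b'
      left
      exact ⟨c, by rw [show Jb.J (vtx B v) = basisVec B b' from hb', hc]⟩
    · obtain ⟨c, hc⟩ := embed b'
      right
      refine ⟨c, ?_⟩
      rw [show Jb.J (vtx B v) = - basisVec B b' from hb', inclFun_neg, hc]
  | inr e =>
    rcases H.edge_cases e with hold | ⟨t, ht, hnew1⟩ | ⟨t, ht, hnew2⟩
    · rw [H.Fv_old e hold]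
      rcases Jb.adapted (Sum.inr ⟨e, hold⟩) with ⟨b', hb'⟩ | ⟨b', hb'⟩
      · obtain ⟨c, hc⟩ := embed b'
        left
        exact ⟨c, by rw [show Jb.J (edg B ⟨e, hold⟩) = basisVec B b' from hb', hc]⟩
      · obtain ⟨c, hc⟩ := embed b'
        right
        refine ⟨c, ?_⟩
        rw [show Jb.J (edg B ⟨e, hold⟩) = - basisVec B b' from hb', inclFun_neg, hc]
    · rw [H.Fv_new1 ht e hnew1]
      rcases sgn_cases t with hs | hs <;> rw [hs]
      · left
        exact ⟨Sum.inr ⟨s(t.1, t.2.2), G.mem_edgeSet.mpr (H.adj2 ht)⟩, by rw [one_smul]; rfl⟩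
      · right
        exact ⟨Sum.inr ⟨s(t.1, t.2.2), G.mem_edgeSet.mpr (H.adj2 ht)⟩,
          by rw [neg_one_smul]; rfl⟩
    · rw [H.Fv_new2 ht e hnew2]
      rcases sgn_cases t with hs | hs <;> rw [hs]
      · right
        exact ⟨Sum.inr ⟨s(t.1, t.2.1), G.mem_edgeSet.mpr (H.adj1 ht)⟩,
          by rw [neg_one_smul]; rfl⟩
      · left
        exact ⟨Sum.inr ⟨s(t.1, t.2.1), G.mem_edgeSet.mpr (H.adj1 ht)⟩,
          by rw [neg_neg, one_smul]; rfl⟩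

end Hyp

end Main2

section Main3
set_option linter.unusedSectionVars false
set_option linter.unusedTactic false
set_option maxHeartbeats 1000000

open scoped Classical

variable {V : Type*} [Fintype V] [LinearOrder V]

/-- In a basic graph every vertex has at most one neighbour. -/
lemma basic_deg {B : SimpleGraph V} (hB : IsBasic B) :
    ∀ v x y : V, B.Adj v x → B.Adj v y → x = y := by
  intro v x y hvx hvy
  obtain ⟨P, hP1, hP2⟩ := hB
  obtain ⟨p, ⟨hpP, hvp⟩, -⟩ := hP1 v
  have hx : x ∈ B.neighborSet v := hvx
  have hy : y ∈ B.neighborSet v := hvy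
  have done0 : B.neighborSet v = ∅ → x = y := by
    intro h
    rw [h] at hx
    exact absurd hx (Set.notMem_empty x)
  have done1 : ∀ n : V, B.neighborSet v = {n} → x = y := by
    intro n h
    rw [h, Set.mem_singleton_iff] at hx hy
    rw [hx, hy]
  rcases hP2 p hpP with ⟨a, b, -, rfl, hA, hB'⟩ | ⟨a, b, c, rfl, hA, hB', hC⟩ |
      ⟨a, b, c, d, rfl, -, -, -, -, hA, hB', hC, hD⟩
  · simp only [Set.mem_insert_iff, Set.mem_singleton_iff] at hvp
    rcases hvp with rfl | rfl
    · exact done0 hA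
    · exact done0 hB'
  · simp only [Set.mem_insert_iff, Set.mem_singleton_iff] at hvp
    rcases hvp with rfl | rfl | rfl
    · exact done1 b hA
    · exact done1 a hB'
    · exact done0 hC
  · simp only [Set.mem_insert_iff, Set.mem_singleton_iff] at hvp
    rcases hvp with rfl | rfl | rfl | rfl
    · exact done1 b hA
    · exact done1 a hB'
    · exact done1 d hC
    · exact done1 c hD

variable {B : SimpleGraph V} [DecidableRel B.Adj] {Jb : AdaptedCS B}
variable {T : Finset (V × V × V)} {G : SimpleGraph V} [DecidableRel G.Adj]

lemma jb_inj0 {z : Niln B} (h : Jb.J z = 0) : z = 0 := by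
  have := Jb.j_squared z
  rw [h, map_zero] at this
  rw [← neg_neg z, ← this, neg_zero]

lemma sign_ne_zero {δ : ℝ} (hδ : δ = 1 ∨ δ = -1) : δ ≠ 0 := by
  rcases hδ with rfl | rfl <;> norm_num

lemma sign_sq {δ : ℝ} (hδ : δ = 1 ∨ δ = -1) : δ * δ = 1 := by
  rcases hδ with rfl | rfl <;> norm_num

/-- `B`-integrability instance: both vertices with vertex-free image. -/
lemma NB_ee {a b : V} (ha : ∀ i, Jb.J (vtx B a) (Sum.inl i) = 0)
    (hb : ∀ i, Jb.J (vtx B b) (Sum.inl i) = 0) : bracketVtx B a b = 0 := by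
  have h := Jb.integrable (vtx B a) (vtx B b)
  rw [bracket_vtx_vtx, bracket_vtxfree_left B _ _ ha, bracket_vtxfree_left B _ _ ha,
    bracket_vtxfree_right B _ _ hb, zero_add, map_zero, add_zero, sub_zero] at h
  exact h

/-- `B`-integrability instance: vertex-free and vertex-type. -/
lemma NB_ev {a b y : V} {δ : ℝ} (ha : ∀ i, Jb.J (vtx B a) (Sum.inl i) = 0)
    (hb : Jb.J (vtx B b) = δ • vtx B y) :
    bracketVtx B a b + δ • Jb.J (bracketVtx B a y) = 0 := by
  have h := Jb.integrable (vtx B a) (vtx B b)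
  rw [bracket_vtx_vtx, bracket_vtxfree_left B _ _ ha, bracket_vtxfree_left B _ _ ha,
    zero_add, hb, bracket_smul_right, bracket_vtx_vtx, map_smul, sub_zero] at h
  exact h

/-- `B`-integrability instance: two vertex-type vertices. -/
lemma NB_vv {a b x y : V} {ε δ : ℝ} (ha : Jb.J (vtx B a) = ε • vtx B x)
    (hb : Jb.J (vtx B b) = δ • vtx B y) :
    bracketVtx B a b + ε • Jb.J (bracketVtx B x b) + δ • Jb.J (bracketVtx B a y)
      - (ε * δ) • bracketVtx B x y = 0 := by
  have h := Jb.integrable (vtx B a) (vtx B b)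
  rw [bracket_vtx_vtx, ha, hb, bracket_smul_left, bracket_smul_right, bracket_smul_left,
    bracket_smul_right, bracket_vtx_vtx, bracket_vtx_vtx, bracket_vtx_vtx, map_add,
    map_smul, map_smul, smul_smul] at h
  rw [add_assoc]
  exact h

/-- Given two vertex-type expressions for `J` on the same vertex, identify them. -/
lemma vtype_eq {b y z : V} {δ : ℝ} (hδ : δ ≠ 0) (h1 : Jb.J (vtx B b) = δ • vtx B y)
    (h2 : Jb.J (vtx B b) = vtx B z) : y = z ∧ δ = 1 := by
  rw [h2] at h1
  exact smul_vtx_inj hδ (h1.symm.trans (one_smul ℝ (vtx B z)).symm)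

lemma vtype_eq_neg {b y z : V} {δ : ℝ} (hδ : δ ≠ 0) (h1 : Jb.J (vtx B b) = δ • vtx B y)
    (h2 : Jb.J (vtx B b) = - vtx B z) : y = z ∧ δ = -1 := by
  rw [h2] at h1
  have h3 : δ • vtx B y = (-1 : ℝ) • vtx B z := by rw [← h1, neg_one_smul]
  exact smul_vtx_inj hδ h3

/-- An edge of `G` between `a` and `b` coming from the expansion. -/
def IsNewEdge (T : Finset (V × V × V)) (a b : V) : Prop :=
  ∃ t ∈ T, s(a, b) = s(t.1, t.2.1) ∨ s(a, b) = s(t.1, t.2.2)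

namespace Hyp

variable (H : Hyp B Jb T G)
include H

lemma adj_of_isNew {a b : V} (h : IsNewEdge T a b) : G.Adj a b :=
  (H.hG a b).mpr (Or.inr h)

lemma adj_cases {a b : V} (h : G.Adj a b) : B.Adj a b ∨ IsNewEdge T a b :=
  (H.hG a b).mp h

lemma not_B_of_isNew {a b : V} (h : IsNewEdge T a b) : ¬ B.Adj a b := by
  obtain ⟨t, ht, h | h⟩ := h
  · intro hadj
    exact (H.hnew t ht).1 (h ▸ B.mem_edgeSet.mpr hadj)
  · intro hadj
    exact (H.hnew t ht).2 (h ▸ B.mem_edgeSet.mpr hadj)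

/-- Transfer of the bracket for non-new pairs. -/
lemma transfer {a b : V} (h : ¬ IsNewEdge T a b) :
    bracketVtx G a b = inclFun B G (bracketVtx B a b) := by
  by_cases hadj : G.Adj a b
  · rcases H.adj_cases hadj with hB | hnew
    · exact bracketVtx_transfer H.hle hB
    · exact absurd hnew h
  · have hB : ¬ B.Adj a b := fun hh => hadj (H.hle a b hh)
    exact bracketVtx_transfer_zero hadj hB

/-- Transfer of the bracket for `B`-adjacent pairs. -/
lemma transferB {a b : V} (h : B.Adj a b) :
    bracketVtx G a b = inclFun B G (bracketVtx B a b) :=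
  bracketVtx_transfer H.hle h

/-- Core lemma, edge-type/edge-type: such vertices are non-adjacent in `G`. -/
lemma core_ee {a b : V} (ha : ∀ i, Jb.J (vtx B a) (Sum.inl i) = 0)
    (hb : ∀ i, Jb.J (vtx B b) (Sum.inl i) = 0) : bracketVtx G a b = 0 := by
  by_cases hadj : G.Adj a b
  · exfalso
    rcases H.adj_cases hadj with hB | ⟨t, ht, hs | hs⟩
    · exact bracketVtx_ne_zero hB (NB_ee ha hb)
    · rcases Sym2.eq_iff.mp hs with ⟨rfl, rfl⟩ | ⟨rfl, rfl⟩
      · exact H.not_etype_21 ht hb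
      · exact H.not_etype_21 ht ha
    · rcases Sym2.eq_iff.mp hs with ⟨rfl, rfl⟩ | ⟨rfl, rfl⟩
      · exact H.not_etype_22 ht hb
      · exact H.not_etype_22 ht ha
  · exact bracketVtx_not_adj hadj

/-- Core lemma, edge-type/vertex-type. -/
lemma core_ev {a b y : V} {δ : ℝ} (hδ : δ = 1 ∨ δ = -1)
    (ha : ∀ i, Jb.J (vtx B a) (Sum.inl i) = 0)
    (hb : Jb.J (vtx B b) = δ • vtx B y) :
    bracketVtx G a b + δ • H.Jt (bracketVtx G a y) = 0 := by
  have hδ0 : δ ≠ 0 := sign_ne_zero hδ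
  by_cases hadj : G.Adj a b
  · rcases H.adj_cases hadj with hB | ⟨t, ht, hs | hs⟩
    · -- old edge: transfer from B
      have hnb := NB_ev ha hb
      have hay : B.Adj a y := by
        by_contra hay
        rw [bracketVtx_not_adj hay, map_zero, smul_zero, add_zero] at hnb
        exact bracketVtx_ne_zero hB hnb
      rw [H.transferB hB, H.transferB hay, H.Jt_incl, ← inclFun_smul, ← inclFun_add, hnb,
        inclFun_zero]
    · rcases Sym2.eq_iff.mp hs with ⟨rfl, rfl⟩ | ⟨rfl, rfl⟩
      · -- a = t.1, b = t.2.1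
        obtain ⟨rfl, rfl⟩ := vtype_eq hδ0 hb (H.hJ t ht)
        rw [one_smul, H.L2b ht, add_neg_cancel]
      · -- a = t.2.1 : contradiction with edge-type
        exact absurd ha (fun hh => H.not_etype_21 ht hh)
    · rcases Sym2.eq_iff.mp hs with ⟨rfl, rfl⟩ | ⟨rfl, rfl⟩
      · -- a = t.1, b = t.2.2
        obtain ⟨rfl, rfl⟩ := vtype_eq_neg hδ0 hb (H.hJ2 ht)
        rw [H.L2a ht]
        module
      · exact absurd ha (fun hh => H.not_etype_22 ht hh)
  · -- not adjacent
    rw [bracketVtx_not_adj hadj, zero_add]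
    have hay : bracketVtx G a y = 0 := by
      by_cases hay : G.Adj a y
      · exfalso
        rcases H.adj_cases hay with hB | ⟨t, ht, hs | hs⟩
        · have hnb := NB_ev ha hb
          rw [bracketVtx_not_adj (fun hh => hadj (H.hle a b hh)), zero_add] at hnb
          have : Jb.J (bracketVtx B a y) = 0 := by
            have := congrArg (fun z => δ⁻¹ • z) hnb
            simpa [smul_smul, inv_mul_cancel₀ hδ0] using this
          exact bracketVtx_ne_zero hB (jb_inj0 this)
        · rcases Sym2.eq_iff.mp hs with ⟨rfl, rfl⟩ | ⟨rfl, rfl⟩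
          · -- a = t.1, y = t.2.1 : then b = t.2.2 and a ~G b
            have h1 := jb_flip (sign_sq hδ) hb
            obtain ⟨hbe, -⟩ := vtype_eq (neg_ne_zero.mpr hδ0) h1 (H.hJ t ht)
            subst hbe
            exact hadj (H.adj2 ht)
          · exact absurd ha (fun hh => H.not_etype_21 ht hh)
        · rcases Sym2.eq_iff.mp hs with ⟨rfl, rfl⟩ | ⟨rfl, rfl⟩
          · -- a = t.1, y = t.2.2 : then b = t.2.1 and a ~G b
            have h1 := jb_flip (sign_sq hδ) hb
            obtain ⟨hbe, -⟩ := vtype_eq_neg (neg_ne_zero.mpr hδ0) h1 (H.hJ2 ht)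
            subst hbe
            exact hadj (H.adj1 ht)
          · exact absurd ha (fun hh => H.not_etype_22 ht hh)
      · exact bracketVtx_not_adj hay
    rw [hay, map_zero, smul_zero]

end Hyp

end Main3

section Main4
set_option linter.unusedSectionVars false
set_option linter.unusedTactic false
set_option maxHeartbeats 1000000

open scoped Classical

variable {V : Type*} [Fintype V] [LinearOrder V]
variable {B : SimpleGraph V} [DecidableRel B.Adj] {Jb : AdaptedCS B}
variable {T : Finset (V × V × V)} {G : SimpleGraph V} [DecidableRel G.Adj]

lemma vtx_inj {H : SimpleGraph V} [DecidableRel H.Adj] {p q : V}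
    (h : vtx H p = vtx H q) : p = q := by
  have h2 : (1 : ℝ) • vtx H p = (1 : ℝ) • vtx H q := by rw [h]
  exact (smul_vtx_inj one_ne_zero h2).1

lemma vtx_ne_neg {H : SimpleGraph V} [DecidableRel H.Adj] {p q : V}
    (h : vtx H p = - vtx H q) : False := by
  have h2 : (1 : ℝ) • vtx H p = (-1 : ℝ) • vtx H q := by
    rw [one_smul, neg_one_smul]; exact h
  have := (smul_vtx_inj one_ne_zero h2).2
  norm_num at this

lemma isNew_symm {a b : V} (h : IsNewEdge T a b) : IsNewEdge T b a := by
  obtain ⟨t, ht, hs | hs⟩ := h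
  · exact ⟨t, ht, Or.inl (Sym2.eq_swap.trans hs)⟩
  · exact ⟨t, ht, Or.inr (Sym2.eq_swap.trans hs)⟩

lemma neg_sign_cases {ε : ℝ} (hε : ε = 1 ∨ ε = -1) : -ε = 1 ∨ -ε = -1 := by
  rcases hε with rfl | rfl
  · right; norm_num
  · left; norm_num

namespace Hyp

variable (H : Hyp B Jb T G)
include H

lemma not_B_adj1 {t : V × V × V} (ht : t ∈ T) : ¬ B.Adj t.1 t.2.1 :=
  fun h => (H.hnew t ht).1 (B.mem_edgeSet.mpr h)

lemma not_B_adj2 {t : V × V × V} (ht : t ∈ T) : ¬ B.Adj t.1 t.2.2 :=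
  fun h => (H.hnew t ht).2 (B.mem_edgeSet.mpr h)

/-- The key structural lemma: if `Jx = ±u` for the apex `u` of a triple `(u,v,w)`,
then `J̃ [x,v] = [x,w]`. -/
lemma core_s {t : V × V × V} (ht : t ∈ T) {x : V} {ε : ℝ} (hε : ε = 1 ∨ ε = -1)
    (hx : Jb.J (vtx B x) = ε • vtx B t.1) :
    H.Jt (bracketVtx G x t.2.1) = bracketVtx G x t.2.2 := by
  have hε0 : ε ≠ 0 := sign_ne_zero hε
  have hb1 : Jb.J (vtx B t.2.1) = (1 : ℝ) • vtx B t.2.2 := by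
    rw [one_smul]; exact H.hJ t ht
  have hb2 : Jb.J (vtx B t.2.2) = (-1 : ℝ) • vtx B t.2.1 := by
    rw [neg_one_smul]; exact H.hJ2 ht
  by_cases hadj : G.Adj x t.2.1
  · rcases H.adj_cases hadj with hB | ⟨t', ht', hs | hs⟩
    · -- x ~B v : impossible
      exfalso
      have hv := NB_vv hx hb1
      have h1 : ¬ B.Adj t.1 t.2.1 := H.not_B_adj1 ht
      have h2 : ¬ B.Adj t.1 t.2.2 := H.not_B_adj2 ht
      have h3 : ¬ B.Adj x t.2.2 := by
        intro hh
        exact H.ne_vw ht (H.hdeg x t.2.1 t.2.2 hB hh)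
      rw [bracketVtx_not_adj h1, bracketVtx_not_adj h2, bracketVtx_not_adj h3] at hv
      simp only [map_zero, smul_zero, add_zero, sub_zero] at hv
      exact bracketVtx_ne_zero hB hv
    · -- s(x, v) = s(t'.1, t'.2.1)
      rcases Sym2.eq_iff.mp hs with ⟨h1, h2⟩ | ⟨h1, h2⟩
      · -- x = t'.1, v = t'.2.1
        subst h1
        have hw : t.2.2 = t'.2.2 := by
          apply vtx_inj (H := B)
          rw [← H.hJ t ht, ← H.hJ t' ht', h2]
        rw [h2, hw, H.L2a ht']
      · -- x = t'.2.1, v = t'.1 : impossible by disjointness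
        exfalso
        subst h1
        obtain ⟨hz, -⟩ := vtype_eq hε0 hx (H.hJ t' ht')
        refine H.uniq12 ht ht' ?_
        rw [← hz, ← h2]
        exact Sym2.eq_swap
    · -- s(x, v) = s(t'.1, t'.2.2)
      rcases Sym2.eq_iff.mp hs with ⟨h1, h2⟩ | ⟨h1, h2⟩
      · -- x = t'.1, v = t'.2.2 : impossible
        exfalso
        apply vtx_ne_neg (H := B) (p := t.2.2) (q := t'.2.1)
        rw [← H.hJ t ht, h2, H.hJ2 ht']
      · -- x = t'.2.2, v = t'.1 : impossible
        exfalso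
        subst h1
        obtain ⟨hz, -⟩ := vtype_eq_neg hε0 hx (H.hJ2 ht')
        have heq : s(t.1, t.2.1) = s(t'.1, t'.2.1) := by
          rw [← hz, ← h2]
          exact Sym2.eq_swap
        have := H.uniq11 ht ht' heq
        subst this
        exact (H.hu t ht).1 (h2.symm)
  · -- x not G-adjacent to v
    rw [bracketVtx_not_adj hadj, map_zero]
    symm
    by_cases hadj2 : G.Adj x t.2.2
    · exfalso
      rcases H.adj_cases hadj2 with hB | ⟨t', ht', hs | hs⟩
      · -- x ~B w : impossible
        have hv := NB_vv hx hb2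
        have h1 : ¬ B.Adj t.1 t.2.2 := H.not_B_adj2 ht
        have h2 : ¬ B.Adj t.1 t.2.1 := H.not_B_adj1 ht
        have h3 : ¬ B.Adj x t.2.1 := fun hh => hadj (H.hle _ _ hh)
        rw [bracketVtx_not_adj h1, bracketVtx_not_adj h2, bracketVtx_not_adj h3] at hv
        simp only [map_zero, smul_zero, add_zero, sub_zero] at hv
        exact bracketVtx_ne_zero hB hv
      · rcases Sym2.eq_iff.mp hs with ⟨h1, h2⟩ | ⟨h1, h2⟩
        · -- x = t'.1, w = t'.2.1 : impossible
          apply vtx_ne_neg (H := B) (p := t'.2.2) (q := t.2.1)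
          rw [← H.hJ t' ht', ← h2, H.hJ2 ht]
        · -- x = t'.2.1, w = t'.1
          subst h1
          obtain ⟨hz, -⟩ := vtype_eq hε0 hx (H.hJ t' ht')
          have heq : s(t.1, t.2.2) = s(t'.1, t'.2.2) := by
            rw [← hz, ← h2]
            exact Sym2.eq_swap
          have := H.uniq22 ht ht' heq
          subst this
          exact (H.hu t ht).2 (h2.symm)
      · rcases Sym2.eq_iff.mp hs with ⟨h1, h2⟩ | ⟨h1, h2⟩
        · -- x = t'.1, w = t'.2.2 : then v = t'.2.1 and x ~G v
          subst h1
          have hv' : t.2.1 = t'.2.1 := by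
            apply vtx_inj (H := B)
            have := congrArg Neg.neg ((H.hJ2 ht).symm.trans (h2 ▸ H.hJ2 ht'))
            simpa using this
          apply hadj
          rw [hv']
          exact H.adj1 ht'
        · -- x = t'.2.2, w = t'.1
          subst h1
          obtain ⟨hz, -⟩ := vtype_eq_neg hε0 hx (H.hJ2 ht')
          refine H.uniq12 ht' ht ?_
          rw [← hz, ← h2]
          exact Sym2.eq_swap
    · exact bracketVtx_not_adj hadj2

end Hyp

end Main4

section Main5
set_option linter.unusedSectionVars false
set_option linter.unusedTactic false
set_option maxHeartbeats 1000000

open scoped Classical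

variable {V : Type*} [Fintype V] [LinearOrder V]
variable {B : SimpleGraph V} [DecidableRel B.Adj] {Jb : AdaptedCS B}
variable {T : Finset (V × V × V)} {G : SimpleGraph V} [DecidableRel G.Adj]

namespace Hyp

variable (H : Hyp B Jb T G)
include H

/-- Swapping the arguments in the vertex-type/vertex-type goal. -/
lemma vv_swap {a b x y : V} {ε δ : ℝ}
    (h : bracketVtx G b a + δ • H.Jt (bracketVtx G y a) + ε • H.Jt (bracketVtx G b x)
      - (δ * ε) • bracketVtx G y x = 0) :
    bracketVtx G a b + ε • H.Jt (bracketVtx G x b) + δ • H.Jt (bracketVtx G a y)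
      - (ε * δ) • bracketVtx G x y = 0 := by
  rw [bracketVtx_antisymm G a b, bracketVtx_antisymm G a y, bracketVtx_antisymm G x b,
    bracketVtx_antisymm G x y, map_neg, map_neg] at h
  linear_combination (norm := module) -h

/-- The new-edge case `a = t.1`, `b = t.2.1`. -/
lemma core_vv_new1 {t : V × V × V} (ht : t ∈ T) {x y : V} {ε δ : ℝ}
    (hε : ε = 1 ∨ ε = -1) (hδ : δ = 1 ∨ δ = -1)
    (ha : Jb.J (vtx B t.1) = ε • vtx B x) (hb : Jb.J (vtx B t.2.1) = δ • vtx B y) :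
    bracketVtx G t.1 t.2.1 + ε • H.Jt (bracketVtx G x t.2.1)
      + δ • H.Jt (bracketVtx G t.1 y) - (ε * δ) • bracketVtx G x y = 0 := by
  obtain ⟨rfl, rfl⟩ := vtype_eq (sign_ne_zero hδ) hb (H.hJ t ht)
  have hxu : Jb.J (vtx B x) = (-ε) • vtx B t.1 := jb_flip (sign_sq hε) ha
  have hS := H.core_s ht (neg_sign_cases hε) hxu
  rw [hS, H.L2b ht]
  module

/-- The new-edge case `a = t.1`, `b = t.2.2`. -/
lemma core_vv_new2 {t : V × V × V} (ht : t ∈ T) {x y : V} {ε δ : ℝ}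
    (hε : ε = 1 ∨ ε = -1) (hδ : δ = 1 ∨ δ = -1)
    (ha : Jb.J (vtx B t.1) = ε • vtx B x) (hb : Jb.J (vtx B t.2.2) = δ • vtx B y) :
    bracketVtx G t.1 t.2.2 + ε • H.Jt (bracketVtx G x t.2.2)
      + δ • H.Jt (bracketVtx G t.1 y) - (ε * δ) • bracketVtx G x y = 0 := by
  obtain ⟨rfl, rfl⟩ := vtype_eq_neg (sign_ne_zero hδ) hb (H.hJ2 ht)
  have hxu : Jb.J (vtx B x) = (-ε) • vtx B t.1 := jb_flip (sign_sq hε) ha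
  have hS := H.core_s ht (neg_sign_cases hε) hxu
  have hS2 : H.Jt (bracketVtx G x t.2.2) = - bracketVtx G x t.2.1 := by
    rw [← hS, H.jt_sq]
  rw [hS2, H.L2a ht]
  module

/-- The case where `s(x,b)` is a new edge and `a ~B b`. -/
lemma core_vv_xb {a b x y : V} {ε δ : ℝ}
    (hε : ε = 1 ∨ ε = -1) (hδ : δ = 1 ∨ δ = -1)
    (ha : Jb.J (vtx B a) = ε • vtx B x) (hb : Jb.J (vtx B b) = δ • vtx B y)
    (hBab : B.Adj a b) (hxb : IsNewEdge T x b) :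
    bracketVtx G a b + ε • H.Jt (bracketVtx G x b) + δ • H.Jt (bracketVtx G a y)
      - (ε * δ) • bracketVtx G x y = 0 := by
  have hax : Jb.J (vtx B x) = (-ε) • vtx B a := jb_flip (sign_sq hε) ha
  obtain ⟨t, ht, hs | hs⟩ := hxb
  · rcases Sym2.eq_iff.mp hs with ⟨h1, h2⟩ | ⟨h1, h2⟩
    · -- x = t.1, b = t.2.1
      subst h1; subst h2
      obtain ⟨rfl, rfl⟩ := vtype_eq (sign_ne_zero hδ) hb (H.hJ t ht)
      have hS := H.core_s ht hε ha
      have hS2 : H.Jt (bracketVtx G a t.2.2) = - bracketVtx G a t.2.1 := by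
        rw [← hS, H.jt_sq]
      rw [hS2, H.L2a ht]
      module
    · -- x = t.2.1, b = t.1 : contradiction with a ~B b
      exfalso
      subst h1; subst h2
      obtain ⟨hae, -⟩ := vtype_eq (neg_ne_zero.mpr (sign_ne_zero hε)) hax (H.hJ t ht)
      subst hae
      exact (H.hnew t ht).2 (by
        rw [show s(t.1, t.2.2) = s(t.2.2, t.1) from Sym2.eq_swap]
        exact B.mem_edgeSet.mpr hBab)
  · rcases Sym2.eq_iff.mp hs with ⟨h1, h2⟩ | ⟨h1, h2⟩
    · -- x = t.1, b = t.2.2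
      subst h1; subst h2
      obtain ⟨rfl, rfl⟩ := vtype_eq_neg (sign_ne_zero hδ) hb (H.hJ2 ht)
      have hS := H.core_s ht hε ha
      rw [hS, H.L2b ht]
      module
    · -- x = t.2.2, b = t.1 : contradiction with a ~B b
      exfalso
      subst h1; subst h2
      obtain ⟨hae, -⟩ := vtype_eq_neg (neg_ne_zero.mpr (sign_ne_zero hε)) hax (H.hJ2 ht)
      subst hae
      exact (H.hnew t ht).1 (by
        rw [show s(t.1, t.2.1) = s(t.2.1, t.1) from Sym2.eq_swap]
        exact B.mem_edgeSet.mpr hBab)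

/-- The case where `s(x,b)` is a new edge and `a` is not `G`-adjacent to `b`. -/
lemma core_vv_xb' {a b x y : V} {ε δ : ℝ}
    (hε : ε = 1 ∨ ε = -1) (hδ : δ = 1 ∨ δ = -1)
    (ha : Jb.J (vtx B a) = ε • vtx B x) (hb : Jb.J (vtx B b) = δ • vtx B y)
    (hadj : ¬ G.Adj a b) (hxb : IsNewEdge T x b) :
    bracketVtx G a b + ε • H.Jt (bracketVtx G x b) + δ • H.Jt (bracketVtx G a y)
      - (ε * δ) • bracketVtx G x y = 0 := by
  have hax : Jb.J (vtx B x) = (-ε) • vtx B a := jb_flip (sign_sq hε) ha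
  obtain ⟨t, ht, hs | hs⟩ := hxb
  · rcases Sym2.eq_iff.mp hs with ⟨h1, h2⟩ | ⟨h1, h2⟩
    · -- x = t.1, b = t.2.1
      subst h1; subst h2
      obtain ⟨rfl, rfl⟩ := vtype_eq (sign_ne_zero hδ) hb (H.hJ t ht)
      have hS := H.core_s ht hε ha
      have hzero : bracketVtx G a t.2.2 = 0 := by
        rw [← hS, bracketVtx_not_adj hadj, map_zero]
      have hS2 : H.Jt (bracketVtx G a t.2.2) = - bracketVtx G a t.2.1 := by
        rw [← hS, H.jt_sq]
      rw [bracketVtx_not_adj hadj, hS2, H.L2a ht, bracketVtx_not_adj hadj]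
      module
    · -- x = t.2.1, b = t.1 : then a ~G b
      exfalso
      subst h1; subst h2
      obtain ⟨hae, -⟩ := vtype_eq (neg_ne_zero.mpr (sign_ne_zero hε)) hax (H.hJ t ht)
      subst hae
      exact hadj (H.adj2 ht).symm
  · rcases Sym2.eq_iff.mp hs with ⟨h1, h2⟩ | ⟨h1, h2⟩
    · -- x = t.1, b = t.2.2
      subst h1; subst h2
      obtain ⟨rfl, rfl⟩ := vtype_eq_neg (sign_ne_zero hδ) hb (H.hJ2 ht)
      have hS := H.core_s ht hε ha
      rw [bracketVtx_not_adj hadj, hS, bracketVtx_not_adj hadj, H.L2b ht]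
      module
    · -- x = t.2.2, b = t.1 : then a ~G b
      exfalso
      subst h1; subst h2
      obtain ⟨hae, -⟩ := vtype_eq_neg (neg_ne_zero.mpr (sign_ne_zero hε)) hax (H.hJ2 ht)
      subst hae
      exact hadj (H.adj1 ht).symm

/-- If `s(x,y)` is a new edge then `s(x,b)` or `s(a,y)` is one. -/
lemma core_vv_xy {a b x y : V} {ε δ : ℝ}
    (hε : ε = 1 ∨ ε = -1) (hδ : δ = 1 ∨ δ = -1)
    (ha : Jb.J (vtx B a) = ε • vtx B x) (hb : Jb.J (vtx B b) = δ • vtx B y)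
    (hxy : IsNewEdge T x y) : IsNewEdge T x b ∨ IsNewEdge T a y := by
  have hax : Jb.J (vtx B x) = (-ε) • vtx B a := jb_flip (sign_sq hε) ha
  have hby : Jb.J (vtx B y) = (-δ) • vtx B b := jb_flip (sign_sq hδ) hb
  obtain ⟨t, ht, hs | hs⟩ := hxy
  · rcases Sym2.eq_iff.mp hs with ⟨h1, h2⟩ | ⟨h1, h2⟩
    · -- x = t.1, y = t.2.1
      subst h1; subst h2
      obtain ⟨hbe, -⟩ := vtype_eq (neg_ne_zero.mpr (sign_ne_zero hδ)) hby (H.hJ t ht)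
      subst hbe
      exact Or.inl ⟨t, ht, Or.inr rfl⟩
    · -- x = t.2.1, y = t.1
      subst h1; subst h2
      obtain ⟨hae, -⟩ := vtype_eq (neg_ne_zero.mpr (sign_ne_zero hε)) hax (H.hJ t ht)
      subst hae
      exact Or.inr ⟨t, ht, Or.inr Sym2.eq_swap⟩
  · rcases Sym2.eq_iff.mp hs with ⟨h1, h2⟩ | ⟨h1, h2⟩
    · -- x = t.1, y = t.2.2
      subst h1; subst h2
      obtain ⟨hbe, -⟩ := vtype_eq_neg (neg_ne_zero.mpr (sign_ne_zero hδ)) hby (H.hJ2 ht)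
      subst hbe
      exact Or.inl ⟨t, ht, Or.inl rfl⟩
    · -- x = t.2.2, y = t.1
      subst h1; subst h2
      obtain ⟨hae, -⟩ := vtype_eq_neg (neg_ne_zero.mpr (sign_ne_zero hε)) hax (H.hJ2 ht)
      subst hae
      exact Or.inr ⟨t, ht, Or.inl Sym2.eq_swap⟩

/-- The transfer case: none of the relevant pairs is a new edge. -/
lemma core_vv_transfer {a b x y : V} {ε δ : ℝ}
    (ha : Jb.J (vtx B a) = ε • vtx B x) (hb : Jb.J (vtx B b) = δ • vtx B y)
    (hab : ¬ IsNewEdge T a b) (hxb : ¬ IsNewEdge T x b)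
    (hay : ¬ IsNewEdge T a y) (hxy : ¬ IsNewEdge T x y) :
    bracketVtx G a b + ε • H.Jt (bracketVtx G x b) + δ • H.Jt (bracketVtx G a y)
      - (ε * δ) • bracketVtx G x y = 0 := by
  have hnb := NB_vv ha hb
  rw [H.transfer hab, H.transfer hxb, H.transfer hay, H.transfer hxy,
    H.Jt_incl, H.Jt_incl, ← inclFun_smul, ← inclFun_smul, ← inclFun_smul,
    ← inclFun_add, ← inclFun_add, ← inclFun_sub, hnb, inclFun_zero]

/-- Core lemma, vertex-type/vertex-type. -/
lemma core_vv {a b x y : V} {ε δ : ℝ}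
    (hε : ε = 1 ∨ ε = -1) (hδ : δ = 1 ∨ δ = -1)
    (ha : Jb.J (vtx B a) = ε • vtx B x) (hb : Jb.J (vtx B b) = δ • vtx B y) :
    bracketVtx G a b + ε • H.Jt (bracketVtx G x b) + δ • H.Jt (bracketVtx G a y)
      - (ε * δ) • bracketVtx G x y = 0 := by
  by_cases hab : IsNewEdge T a b
  · obtain ⟨t, ht, hs | hs⟩ := hab
    · rcases Sym2.eq_iff.mp hs with ⟨h1, h2⟩ | ⟨h1, h2⟩
      · subst h1; subst h2
        exact H.core_vv_new1 ht hε hδ ha hb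
      · subst h1; subst h2
        exact H.vv_swap (H.core_vv_new1 ht hδ hε hb ha)
    · rcases Sym2.eq_iff.mp hs with ⟨h1, h2⟩ | ⟨h1, h2⟩
      · subst h1; subst h2
        exact H.core_vv_new2 ht hε hδ ha hb
      · subst h1; subst h2
        exact H.vv_swap (H.core_vv_new2 ht hδ hε hb ha)
  · by_cases hxb : IsNewEdge T x b
    · by_cases hadj : G.Adj a b
      · rcases H.adj_cases hadj with hB | hN
        · exact H.core_vv_xb hε hδ ha hb hB hxb
        · exact absurd hN hab
      · exact H.core_vv_xb' hε hδ ha hb hadj hxb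
    · by_cases hay : IsNewEdge T a y
      · have hay' : IsNewEdge T y a := isNew_symm hay
        by_cases hadj : G.Adj a b
        · rcases H.adj_cases hadj with hB | hN
          · exact H.vv_swap (H.core_vv_xb hδ hε hb ha hB.symm hay')
          · exact absurd hN hab
        · exact H.vv_swap (H.core_vv_xb' hδ hε hb ha (fun hh => hadj hh.symm) hay')
      · by_cases hxy : IsNewEdge T x y
        · rcases H.core_vv_xy hε hδ ha hb hxy with hh | hh
          · exact absurd hh hxb
          · exact absurd hh hay
        · exact H.core_vv_transfer ha hb hab hxb hay hxy

end Hyp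

end Main5

section Main6
set_option linter.unusedSectionVars false
set_option linter.unusedTactic false
set_option maxHeartbeats 1000000

open scoped Classical

variable {V : Type*} [Fintype V] [LinearOrder V]

lemma bracket_antisymm (G : SimpleGraph V) [DecidableRel G.Adj] (x y : Niln G) :
    bracket G y x = - bracket G x y := by
  unfold bracket
  rw [Finset.sum_comm]
  rw [← Finset.sum_neg_distrib]
  refine Finset.sum_congr rfl fun i _ => ?_
  rw [← Finset.sum_neg_distrib]
  refine Finset.sum_congr rfl fun j _ => ?_
  rw [bracketVtx_antisymm G i j, smul_neg, mul_comm]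

variable {B : SimpleGraph V} [DecidableRel B.Adj] {Jb : AdaptedCS B}
variable {T : Finset (V × V × V)} {G : SimpleGraph V} [DecidableRel G.Adj]

namespace Hyp

variable (H : Hyp B Jb T G)

/-- The Nijenhuis expression of `J̃`. -/
noncomputable def NTf (x y : Niln G) : Niln G :=
  bracket G x y + H.Jt (bracket G (H.Jt x) y + bracket G x (H.Jt y))
    - bracket G (H.Jt x) (H.Jt y)

include H

lemma nt_swap (p q : Niln G) : H.NTf q p = - H.NTf p q := by
  unfold NTf
  rw [bracket_antisymm G p q, bracket_antisymm G p (H.Jt q),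
    bracket_antisymm G (H.Jt p) q, bracket_antisymm G (H.Jt p) (H.Jt q)]
  simp only [map_add, map_neg]
  module

/-- Shape of `J̃` on a vertex basis vector. -/
lemma jt_vtx_shape (a : V) :
    ((∀ i, (H.Jt (vtx G a)) (Sum.inl i) = 0) ∧ (∀ i, Jb.J (vtx B a) (Sum.inl i) = 0)) ∨
    (∃ ε x, (ε = (1:ℝ) ∨ ε = -1) ∧ Jb.J (vtx B a) = ε • vtx B x ∧
      H.Jt (vtx G a) = ε • vtx G x) := by
  rcases jb_classify (Jb := Jb) a with ha | ⟨ε, x, hε, hx⟩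
  · left
    refine ⟨fun i => ?_, ha⟩
    rw [H.Jt_vtx]
    exact ha i
  · right
    exact ⟨ε, x, hε, hx, by rw [H.Jt_vtx, hx, inclFun_smul, inclFun_vtx]⟩

/-- Shape of `J̃` on an edge basis vector. -/
lemma jt_edg_shape (e : G.edgeSet) :
    (∀ i, (H.Jt (edg G e)) (Sum.inl i) = 0) ∨
    (∃ ε z, (ε = (1:ℝ) ∨ ε = -1) ∧ (∀ i, Jb.J (vtx B z) (Sum.inl i) = 0) ∧
      H.Jt (edg G e) = ε • vtx G z) := by
  rw [H.Jt_edg]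
  rcases H.edge_cases e with hold | ⟨t, ht, hnew1⟩ | ⟨t, ht, hnew2⟩
  · rw [H.Fv_old e hold]
    rcases jb_classify_edge (Jb := Jb) ⟨e, hold⟩ with he | ⟨ε, z, hε, hz, hzf⟩
    · left
      intro i
      exact he i
    · right
      exact ⟨ε, z, hε, hzf, by rw [hz, inclFun_smul, inclFun_vtx]⟩
  · left
    intro i
    rw [H.Fv_new1 ht e hnew1]
    simp [edg, Pi.single_apply]
  · left
    intro i
    rw [H.Fv_new2 ht e hnew2]
    simp [edg, Pi.single_apply]

lemma edg_vf (e : G.edgeSet) (i : V) : (edg G e) (Sum.inl i) = 0 := by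
  simp [edg, Pi.single_apply]

/-- Nijenhuis vanishes when the left argument and its image are vertex-free. -/
lemma nt_ff {p : Niln G} (q : Niln G) (h1 : ∀ i, p (Sum.inl i) = 0)
    (h2 : ∀ i, (H.Jt p) (Sum.inl i) = 0) : H.NTf p q = 0 := by
  unfold NTf
  rw [bracket_vtxfree_left G _ _ h1, bracket_vtxfree_left G _ _ h2,
    bracket_vtxfree_left G _ _ h1, bracket_vtxfree_left G _ _ h2]
  simp

lemma nt_ff' (p : Niln G) {q : Niln G} (h1 : ∀ i, q (Sum.inl i) = 0)
    (h2 : ∀ i, (H.Jt q) (Sum.inl i) = 0) : H.NTf p q = 0 := by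
  rw [nt_swap, H.nt_ff p h1 h2, neg_zero]

/-- Nijenhuis on two vertex basis vectors. -/
lemma nt_vtx_vtx (a b : V) : H.NTf (vtx G a) (vtx G b) = 0 := by
  rcases H.jt_vtx_shape a with ⟨haf, haJ⟩ | ⟨ε, x, hε, hax, haJ⟩
  · rcases H.jt_vtx_shape b with ⟨hbf, hbJ⟩ | ⟨δ, y, hδ, hby, hbJ⟩
    · -- both edge-type
      unfold NTf
      rw [bracket_vtxfree_left G _ _ haf, bracket_vtxfree_right G _ _ hbf,
        bracket_vtxfree_left G _ _ haf, bracket_vtx_vtx]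
      rw [H.core_ee haJ hbJ]
      simp
    · -- a edge-type, b vertex-type
      unfold NTf
      rw [bracket_vtxfree_left G _ _ haf, bracket_vtxfree_left G _ _ haf,
        bracket_vtx_vtx, hbJ, bracket_smul_right, bracket_vtx_vtx, zero_add,
        map_smul, sub_zero]
      exact H.core_ev hδ haJ hby
  · rcases H.jt_vtx_shape b with ⟨hbf, hbJ⟩ | ⟨δ, y, hδ, hby, hbJ⟩
    · -- a vertex-type, b edge-type : swap
      rw [nt_swap]
      have : H.NTf (vtx G b) (vtx G a) = 0 := by
        unfold NTf
        rw [bracket_vtxfree_left G _ _ hbf, bracket_vtxfree_left G _ _ hbf,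
          bracket_vtx_vtx, haJ, bracket_smul_right, bracket_vtx_vtx, zero_add,
          map_smul, sub_zero]
        exact H.core_ev hε hbJ hax
      rw [this, neg_zero]
    · -- both vertex-type
      unfold NTf
      rw [bracket_vtx_vtx, haJ, hbJ, bracket_smul_left, bracket_smul_right,
        bracket_smul_left, bracket_smul_right, bracket_vtx_vtx, bracket_vtx_vtx,
        bracket_vtx_vtx, map_add, map_smul, map_smul, smul_smul]
      have := H.core_vv hε hδ hax hby
      linear_combination (norm := module) this

/-- Nijenhuis on a vertex and an edge basis vector. -/
lemma nt_vtx_edg (a : V) (e : G.edgeSet) : H.NTf (vtx G a) (edg G e) = 0 := by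
  rcases H.jt_edg_shape e with hef | ⟨δ, z, hδ, hzf, heJ⟩
  · exact H.nt_ff' _ (H.edg_vf e) hef
  · rcases H.jt_vtx_shape a with ⟨haf, haJ⟩ | ⟨ε, x, hε, hax, haJ⟩
    · -- a edge-type
      unfold NTf
      rw [bracket_vtxfree_right G _ _ (H.edg_vf e), bracket_vtxfree_left G _ _ haf,
        bracket_vtxfree_left G _ _ haf, heJ, bracket_smul_right, bracket_vtx_vtx]
      rw [H.core_ee haJ hzf]
      simp
    · -- a vertex-type
      unfold NTf
      rw [bracket_vtxfree_right G _ _ (H.edg_vf e),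
        bracket_vtxfree_right G _ _ (H.edg_vf e), heJ, bracket_smul_right,
        bracket_smul_right, bracket_vtx_vtx, haJ, bracket_smul_left,
        bracket_vtx_vtx, zero_add, zero_add, map_smul, smul_smul]
      -- goal : δ • Jt (W a z) - (ε * δ) • W x z = 0
      have hcv := H.core_ev hε hzf hax
      -- hcv : W z a + ε • Jt (W z x) = 0
      have h2 := congrArg H.Jt hcv
      rw [map_add, map_smul, H.jt_sq, map_zero] at h2
      -- h2 : Jt (W z a) + ε • (-(W z x)) = 0
      rw [bracketVtx_antisymm G z a, bracketVtx_antisymm G z x, map_neg]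
      linear_combination (norm := module) (-δ : ℝ) • h2

/-- Nijenhuis on two edge basis vectors. -/
lemma nt_edg_edg (e f : G.edgeSet) : H.NTf (edg G e) (edg G f) = 0 := by
  rcases H.jt_edg_shape e with hef | ⟨ε, z, hε, hzf, heJ⟩
  · exact H.nt_ff _ (H.edg_vf e) hef
  · rcases H.jt_edg_shape f with hff | ⟨δ, z', hδ, hzf', hfJ⟩
    · exact H.nt_ff' _ (H.edg_vf f) hff
    · unfold NTf
      rw [bracket_vtxfree_left G _ _ (H.edg_vf e),
        bracket_vtxfree_left G _ _ (H.edg_vf e),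
        bracket_vtxfree_right G _ _ (H.edg_vf f), heJ, hfJ, bracket_smul_left,
        bracket_smul_right, bracket_vtx_vtx, smul_smul]
      rw [H.core_ee hzf hzf']
      simp

lemma nt_basis (b c : V ⊕ G.edgeSet) : H.NTf (basisVec G b) (basisVec G c) = 0 := by
  cases b with
  | inl a =>
    cases c with
    | inl b' => exact H.nt_vtx_vtx a b'
    | inr f => exact H.nt_vtx_edg a f
  | inr e =>
    cases c with
    | inl b' =>
      rw [show basisVec G (Sum.inr e) = edg G e from rfl,
        show basisVec G (Sum.inl b') = vtx G b' from rfl, nt_swap, H.nt_vtx_edg b' e,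
        neg_zero]
    | inr f => exact H.nt_edg_edg e f

end Hyp

end Main6

section Main7
set_option linter.unusedSectionVars false
set_option linter.unusedTactic false
set_option maxHeartbeats 1000000

open scoped Classical

variable {V : Type*} [Fintype V] [LinearOrder V]
variable {B : SimpleGraph V} [DecidableRel B.Adj] {Jb : AdaptedCS B}
variable {T : Finset (V × V × V)} {G : SimpleGraph V} [DecidableRel G.Adj]

namespace Hyp

variable (H : Hyp B Jb T G)

/-- The Nijenhuis expression as a bilinear map. -/
noncomputable def NTL : Niln G →ₗ[ℝ] Niln G →ₗ[ℝ] Niln G :=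
  LinearMap.mk₂ ℝ H.NTf
    (fun x x' y => by
      unfold NTf
      simp only [map_add, bracket_add_left, bracket_add_right]
      module)
    (fun c x y => by
      unfold NTf
      simp only [map_add, map_smul, bracket_smul_left, bracket_smul_right, smul_add,
        smul_sub])
    (fun x y y' => by
      unfold NTf
      simp only [map_add, bracket_add_left, bracket_add_right]
      module)
    (fun c x y => by
      unfold NTf
      simp only [map_add, map_smul, bracket_smul_left, bracket_smul_right, smul_add,
        smul_sub])

include H

lemma nt_zero (x y : Niln G) : H.NTf x y = 0 := by
  have step1 : ∀ c : V ⊕ G.edgeSet, ∀ x : Niln G, H.NTL x (basisVec G c) = 0 := by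
    intro c x
    have := niln_linear_ext G (H.NTL.flip (basisVec G c)) 0 ?_ x
    · simpa using this
    intro b
    simp only [LinearMap.flip_apply, LinearMap.zero_apply]
    exact H.nt_basis b c
  have step2 : H.NTL x y = 0 := by
    have := niln_linear_ext G (H.NTL x) 0 ?_ y
    · simpa using this
    intro c
    simp only [LinearMap.zero_apply]
    exact step1 c x
  exact step2

/-- The extended adapted complex structure. -/
noncomputable def JtCS : AdaptedCS G where
  J := H.Jt
  j_squared := H.jt_sq
  integrable := fun x y => by
    have := H.nt_zero x y
    unfold NTf at this
    exact this
  adapted := H.jt_adapted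

lemma JtCS_J : (H.JtCS).J = H.Jt := rfl

end Hyp

end Main7


/-- Let `B` be a basic graph with an adapted complex structure `J`,
and let `B̃` (here: `G`) be an expansion of `B`, obtained by adding, for a family `T` of
triples `(u, v, w)` with `w = Jv` and `u ∉ {v, w}`, the pairs of edges `uv` and `uw`
(all the added edges being new and pairwise distinct).  Then the almost complex
structure `J̃` extending `J` (keeping `J` on the vertices and the old edges, and with
`J̃ e_{i,k} = ± e_{j,k}` on each added pair of edges, the sign depending on the position
of `k` relative to `i` and `j` in the labeling) is integrable; hence it is an adapted
complex structure on `B̃` extending `J`. -/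
theorem statement14 (B : SimpleGraph V) [DecidableRel B.Adj] (Jb : AdaptedCS B)
    (hB : IsBasic B) (T : Finset (V × V × V))
    (hJ : ∀ t ∈ T, Jb.J (vtx B t.2.1) = vtx B t.2.2)
    (hu : ∀ t ∈ T, t.1 ≠ t.2.1 ∧ t.1 ≠ t.2.2)
    (hnew : ∀ t ∈ T, s(t.1, t.2.1) ∉ B.edgeSet ∧ s(t.1, t.2.2) ∉ B.edgeSet)
    (hpair : ∀ t ∈ T, s(t.1, t.2.1) ≠ s(t.1, t.2.2))
    (hdist : ∀ t ∈ T, ∀ t' ∈ T, t ≠ t' →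
      ({s(t.1, t.2.1), s(t.1, t.2.2)} : Set (Sym2 V)) ∩
        {s(t'.1, t'.2.1), s(t'.1, t'.2.2)} = ∅)
    (G : SimpleGraph V) [DecidableRel G.Adj]
    (hG : ∀ a b : V, G.Adj a b ↔
      (B.Adj a b ∨ ∃ t ∈ T, s(a, b) = s(t.1, t.2.1) ∨ s(a, b) = s(t.1, t.2.2))) :
    ∃ Jt : AdaptedCS G,
      (∀ v : V, Jt.J (vtx G v) = inclFun B G (Jb.J (vtx B v))) ∧
      (∀ e : B.edgeSet, ∀ e' : G.edgeSet, (e : Sym2 V) = (e' : Sym2 V) →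
        Jt.J (edg G e') = inclFun B G (Jb.J (edg B e))) ∧
      (∀ t ∈ T, ∀ e f : G.edgeSet,
        (e : Sym2 V) = s(t.1, t.2.1) → (f : Sym2 V) = s(t.1, t.2.2) →
        Jt.J (edg G e) =
          (if (t.1 < t.2.1 ∧ t.1 < t.2.2) ∨ (t.2.1 < t.1 ∧ t.2.2 < t.1)
           then edg G f else - edg G f)) := by
  have H : Hyp B Jb T G := ⟨hJ, hu, hnew, hpair, hdist, hG, basic_deg hB⟩
  refine ⟨H.JtCS, fun v => H.Jt_vtx v, ?_, ?_⟩
  · intro e e' heq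
    have he' : (e' : Sym2 V) ∈ B.edgeSet := heq ▸ e.2
    rw [H.JtCS_J, H.Jt_edg, H.Fv_old e' he',
      show (⟨(e' : Sym2 V), he'⟩ : B.edgeSet) = e from Subtype.ext heq.symm]
  · intro t ht e f he hf
    rw [H.JtCS_J, H.Jt_edg, H.Fv_new1 ht e he]
    rw [show (⟨s(t.1, t.2.2), G.mem_edgeSet.mpr (H.adj2 ht)⟩ : G.edgeSet) = f from
      Subtype.ext hf.symm]
    unfold sgn
    split_ifs
    · rw [one_smul]
    · rw [neg_one_smul]

end GraphLie
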